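/- Let k be a field and m, n ≥ 1. The k-subalgebra of the polynomial ring k[t_1,…,t_{m+n+2}] generated by the monomials t_a t_b for 1 ≤ a ≤ m+1 and m+2 ≤ b ≤ m+n+2 (the edge ring k[K_{m+1,n+1}]) is isomorphic as a k-algebra to the k-subalgebra of k[x_1,…,x_m, y_1,…,y_n, t] generated by the monomials x_1⋯x_i · y_1⋯y_j · t for 0 ≤ i ≤ m and 0 ≤ j ≤ n (the Hibi ring k[Π_{m,n}]). -/

import Mathlib

open MvPolynomial

private lemma s7_tele {F : Type*} [Field F] (N : ℕ) (w : ℕ → F) (hw : ∀ k, w k ≠ 0) :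
    ∀ c, c ≤ N →
      (∏ i ∈ Finset.univ.filter (fun i : Fin N => (i : ℕ) < c),
        (w ((i : ℕ) + 1) / w (i : ℕ))) = w c / w 0 := by
  intro c
  induction c with
  | zero =>
    intro _
    simp [div_self (hw 0)]
  | succ c ih =>
    intro hc
    have h1 : (Finset.univ.filter (fun i : Fin N => (i : ℕ) < c + 1))
        = insert (⟨c, by omega⟩ : Fin N)
            (Finset.univ.filter (fun i : Fin N => (i : ℕ) < c)) := by
      ext i
      simp only [Finset.mem_filter, Finset.mem_univ, true_and, Finset.mem_insert,
        Fin.ext_iff]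
      omega
    rw [h1, Finset.prod_insert (by simp), ih (by omega)]
    have h0 := hw 0
    have hc' := hw c
    field_simp

section s7aux

variable (K : Type*) [Field K] (m n : ℕ)

private noncomputable def s7f : Fin (m + n + 2) → MvPolynomial (Fin m ⊕ Fin n ⊕ Bool) K :=
  fun v =>
    if (v : ℕ) < m + 1 then
      (∏ i ∈ Finset.univ.filter (fun i : Fin m => (i : ℕ) < (v : ℕ)), X (Sum.inl i)) *
        X (Sum.inr (Sum.inr false))
    else
      (∏ j ∈ Finset.univ.filter (fun j : Fin n => (j : ℕ) < (v : ℕ) - (m + 1)),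
        X (Sum.inr (Sum.inl j))) * X (Sum.inr (Sum.inr true))

private noncomputable def s7phi :
    MvPolynomial (Fin (m + n + 2)) K →ₐ[K] MvPolynomial (Fin m ⊕ Fin n ⊕ Bool) K :=
  aeval (s7f K m n)

private noncomputable def s7g :
    Fin m ⊕ Fin n ⊕ Unit → MvPolynomial (Fin m ⊕ Fin n ⊕ Bool) K
  | Sum.inl i => X (Sum.inl i)
  | Sum.inr (Sum.inl j) => X (Sum.inr (Sum.inl j))
  | Sum.inr (Sum.inr _) => X (Sum.inr (Sum.inr false)) * X (Sum.inr (Sum.inr true))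

private noncomputable def s7psi :
    MvPolynomial (Fin m ⊕ Fin n ⊕ Unit) K →ₐ[K] MvPolynomial (Fin m ⊕ Fin n ⊕ Bool) K :=
  aeval (s7g K m n)

private noncomputable def s7rho :
    MvPolynomial (Fin m ⊕ Fin n ⊕ Bool) K →ₐ[K] MvPolynomial (Fin m ⊕ Fin n ⊕ Unit) K :=
  aeval (fun v => match v with
    | Sum.inl i => X (Sum.inl i)
    | Sum.inr (Sum.inl j) => X (Sum.inr (Sum.inl j))
    | Sum.inr (Sum.inr false) => X (Sum.inr (Sum.inr ()))
    | Sum.inr (Sum.inr true) => 1)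

private lemma s7psi_inj : Function.Injective (s7psi K m n) := by
  have h : (s7rho K m n).comp (s7psi K m n) = AlgHom.id K _ := by
    apply MvPolynomial.algHom_ext
    rintro (i | j | ⟨⟩) <;> simp [s7psi, s7rho, s7g]
  intro p q hpq
  have hp := congrArg (fun (F : MvPolynomial (Fin m ⊕ Fin n ⊕ Unit) K →ₐ[K]
    MvPolynomial (Fin m ⊕ Fin n ⊕ Unit) K) => F p) h
  have hq := congrArg (fun (F : MvPolynomial (Fin m ⊕ Fin n ⊕ Unit) K →ₐ[K]
    MvPolynomial (Fin m ⊕ Fin n ⊕ Unit) K) => F q) h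
  simp only [AlgHom.comp_apply, AlgHom.id_apply] at hp hq
  rw [← hp, ← hq, hpq]

private noncomputable def s7u : ℕ → FractionRing (MvPolynomial (Fin (m + n + 2)) K) :=
  fun k =>
    if h : k < m + n + 2 then
      algebraMap (MvPolynomial (Fin (m + n + 2)) K) _ (X (⟨k, h⟩ : Fin (m + n + 2)))
    else 1

private lemma s7u_ne (k : ℕ) : s7u K m n k ≠ 0 := by
  unfold s7u
  split
  · rw [Ne, IsFractionRing.to_map_eq_zero_iff]
    exact X_ne_zero _
  · exact one_ne_zero

private noncomputable def s7gl :
    Fin m ⊕ Fin n ⊕ Bool → FractionRing (MvPolynomial (Fin (m + n + 2)) K)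
  | Sum.inl i => s7u K m n ((i : ℕ) + 1) / s7u K m n (i : ℕ)
  | Sum.inr (Sum.inl j) => s7u K m n (m + 2 + (j : ℕ)) / s7u K m n (m + 1 + (j : ℕ))
  | Sum.inr (Sum.inr false) => s7u K m n 0
  | Sum.inr (Sum.inr true) => s7u K m n (m + 1)

private noncomputable def s7lam :
    MvPolynomial (Fin m ⊕ Fin n ⊕ Bool) K →+*
      FractionRing (MvPolynomial (Fin (m + n + 2)) K) :=
  eval₂Hom ((algebraMap (MvPolynomial (Fin (m + n + 2)) K) _).comp
    (C : K →+* MvPolynomial (Fin (m + n + 2)) K)) (s7gl K m n)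

private lemma s7key :
    (s7lam K m n).comp ((s7phi K m n) :
        MvPolynomial (Fin (m + n + 2)) K →+* MvPolynomial (Fin m ⊕ Fin n ⊕ Bool) K)
      = algebraMap (MvPolynomial (Fin (m + n + 2)) K)
          (FractionRing (MvPolynomial (Fin (m + n + 2)) K)) := by
  apply MvPolynomial.ringHom_ext
  · intro a
    simp [s7lam, s7phi, MvPolynomial.algebraMap_eq]
  · intro v
    have hrhs : (algebraMap (MvPolynomial (Fin (m + n + 2)) K)
        (FractionRing (MvPolynomial (Fin (m + n + 2)) K))) (X v) = s7u K m n (v : ℕ) := by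
      simp [s7u, v.isLt]
    rw [RingHom.comp_apply, hrhs]
    have hφX : (s7phi K m n) (X v) = s7f K m n v := by simp [s7phi]
    rw [AlgHom.coe_toRingHom, hφX]
    by_cases hv : (v : ℕ) < m + 1
    · rw [s7f, if_pos hv, map_mul, map_prod]
      have hX1 : ∀ i : Fin m,
          s7lam K m n (X (Sum.inl i) : MvPolynomial (Fin m ⊕ Fin n ⊕ Bool) K)
            = s7u K m n ((i : ℕ) + 1) / s7u K m n (i : ℕ) := by
        intro i; simp [s7lam, s7gl]
      have hX2 : s7lam K m n (X (Sum.inr (Sum.inr false)) :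
          MvPolynomial (Fin m ⊕ Fin n ⊕ Bool) K) = s7u K m n 0 := by
        simp [s7lam, s7gl]
      rw [Finset.prod_congr rfl (fun i _ => hX1 i), hX2,
        s7_tele m (s7u K m n) (s7u_ne K m n) (v : ℕ) (by omega),
        div_mul_cancel₀ _ (s7u_ne K m n 0)]
    · rw [s7f, if_neg hv, map_mul, map_prod]
      have hX1 : ∀ j : Fin n,
          s7lam K m n (X (Sum.inr (Sum.inl j)) : MvPolynomial (Fin m ⊕ Fin n ⊕ Bool) K)
            = (fun k => s7u K m n (m + 1 + k)) ((j : ℕ) + 1)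
              / (fun k => s7u K m n (m + 1 + k)) (j : ℕ) := by
        intro j
        simp only [s7lam, s7gl, coe_eval₂Hom, eval₂_X]
        congr 2
        omega
      have hX2 : s7lam K m n (X (Sum.inr (Sum.inr true)) :
          MvPolynomial (Fin m ⊕ Fin n ⊕ Bool) K) = s7u K m n (m + 1) := by
        simp [s7lam, s7gl]
      rw [Finset.prod_congr rfl (fun j _ => hX1 j), hX2,
        s7_tele n (fun k => s7u K m n (m + 1 + k)) (fun k => s7u_ne K m n _)
          ((v : ℕ) - (m + 1)) (by omega)]
      simp only [Nat.add_zero]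
      rw [show m + 1 + ((v : ℕ) - (m + 1)) = (v : ℕ) by omega,
        div_mul_cancel₀ _ (s7u_ne K m n (m + 1))]

set_option synthInstance.maxHeartbeats 1000000 in
set_option maxHeartbeats 1000000 in
private lemma s7phi_inj : Function.Injective (s7phi K m n) := by
  intro p q h
  apply IsFractionRing.injective (MvPolynomial (Fin (m + n + 2)) K)
    (FractionRing (MvPolynomial (Fin (m + n + 2)) K))
  rw [← s7key K m n]
  simp only [RingHom.comp_apply, AlgHom.coe_toRingHom]
  exact congrArg (s7lam K m n) h

end s7aux

/-- The edge ring `k[K_{m+1,n+1}]` (with vertices 0-based: first part `0,…,m`,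
second part `m+1,…,m+n+1`) is isomorphic as a `k`-algebra to the Hibi ring
`k[Π_{m,n}]`, the subalgebra of `k[x_1,…,x_m,y_1,…,y_n,t]` generated by the monomials
`x_1⋯x_i · y_1⋯y_j · t` with `0 ≤ i ≤ m`, `0 ≤ j ≤ n`. -/
theorem stmt_7 (K : Type*) [Field K] (m n : ℕ) (hm : 1 ≤ m) (hn : 1 ≤ n) :
    Nonempty (
      (Algebra.adjoin K {p : MvPolynomial (Fin (m + n + 2)) K |
        ∃ a b : Fin (m + n + 2), (a : ℕ) < m + 1 ∧ m + 1 ≤ (b : ℕ) ∧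
          p = X a * X b}) ≃ₐ[K]
      (Algebra.adjoin K {q : MvPolynomial (Fin m ⊕ Fin n ⊕ Unit) K |
        ∃ i j : ℕ, i ≤ m ∧ j ≤ n ∧
          q = (∏ a ∈ Finset.univ.filter (fun a : Fin m => (a : ℕ) < i),
                X (Sum.inl a)) *
              (∏ b ∈ Finset.univ.filter (fun b : Fin n => (b : ℕ) < j),
                X (Sum.inr (Sum.inl b))) *
              X (Sum.inr (Sum.inr ()))})) := by
  classical
  set S1 : Set (MvPolynomial (Fin (m + n + 2)) K) :=
    {p : MvPolynomial (Fin (m + n + 2)) K |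
      ∃ a b : Fin (m + n + 2), (a : ℕ) < m + 1 ∧ m + 1 ≤ (b : ℕ) ∧ p = X a * X b} with hS1
  set S2 : Set (MvPolynomial (Fin m ⊕ Fin n ⊕ Unit) K) :=
    {q : MvPolynomial (Fin m ⊕ Fin n ⊕ Unit) K |
      ∃ i j : ℕ, i ≤ m ∧ j ≤ n ∧
        q = (∏ a ∈ Finset.univ.filter (fun a : Fin m => (a : ℕ) < i),
              X (Sum.inl a)) *
            (∏ b ∈ Finset.univ.filter (fun b : Fin n => (b : ℕ) < j),
              X (Sum.inr (Sum.inl b))) *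
            X (Sum.inr (Sum.inr ()))} with hS2
  have himg : (s7phi K m n) '' S1 = (s7psi K m n) '' S2 := by
    ext p
    constructor
    · rintro ⟨_, ⟨a, b, ha, hb, rfl⟩, rfl⟩
      refine ⟨(∏ a' ∈ Finset.univ.filter (fun a' : Fin m => (a' : ℕ) < (a : ℕ)),
            X (Sum.inl a')) *
          (∏ b' ∈ Finset.univ.filter (fun b' : Fin n => (b' : ℕ) < (b : ℕ) - (m + 1)),
            X (Sum.inr (Sum.inl b'))) * X (Sum.inr (Sum.inr ())),
        ⟨(a : ℕ), (b : ℕ) - (m + 1), by omega, by have := b.isLt; omega, rfl⟩, ?_⟩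
      simp only [s7psi, s7phi, map_mul, map_prod, aeval_X, s7g, s7f, if_pos ha,
        if_neg (show ¬ ((b : ℕ) < m + 1) by omega)]
      ring
    · rintro ⟨_, ⟨i, j, hi, hj, rfl⟩, rfl⟩
      refine ⟨X (⟨i, by omega⟩ : Fin (m + n + 2)) * X (⟨m + 1 + j, by omega⟩ : Fin (m + n + 2)),
        ⟨⟨i, by omega⟩, ⟨m + 1 + j, by omega⟩, by simp only [Fin.val_mk]; omega,
          by simp only [Fin.val_mk]; omega, rfl⟩, ?_⟩
      simp only [s7phi, s7psi, map_mul, map_prod, aeval_X, s7f, s7g, Fin.val_mk,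
        if_pos (show i < m + 1 by omega), if_neg (show ¬ (m + 1 + j < m + 1) by omega),
        Nat.add_sub_cancel_left]
      ring
  have hmap : (Algebra.adjoin K S1).map (s7phi K m n)
      = (Algebra.adjoin K S2).map (s7psi K m n) := by
    rw [AlgHom.map_adjoin, AlgHom.map_adjoin, himg]
  exact ⟨((Algebra.adjoin K S1).equivMapOfInjective (s7phi K m n)
      (s7phi_inj K m n)).trans ((Subalgebra.equivOfEq _ _ hmap).trans
      ((Algebra.adjoin K S2).equivMapOfInjective (s7psi K m n) (s7psi_inj K m n)).symm)⟩
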